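/- Let A be an AUF algebra. Then: (a) for any idempotents e, f ∈ A, one has dim_ℂ eAf < ∞; (b) every nonzero idempotent e ∈ A admits a finite orthogonal primitive decomposition, i.e., there exist pairwise orthogonal primitive idempotents ε₁, …, ε_n of A with e = ε₁ + ⋯ + ε_n. -/

import Mathlib

open scoped BigOperators

universe u v

section BasicDefs

variable (R : Type u)

section MulOnly
variable [NonUnitalRing R]

/-- An idempotent element. -/
def IsIdem (e : R) : Prop := e * e = e

/-- Two idempotents are orthogonal. -/
def OrthIdem (e f : R) : Prop := e * f = 0 ∧ f * e = 0

/-- `f ≤ e` for idempotents: `f * e = f` and `e * f = f`. -/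
def SubIdem (f e : R) : Prop := f * e = f ∧ e * f = f

/-- A primitive idempotent. -/
def IsPrimIdem (e : R) : Prop :=
  IsIdem R e ∧ e ≠ 0 ∧ ∀ f : R, IsIdem R f → SubIdem R f e → f = 0 ∨ f = e

/-- Equivalence of idempotents: partial isometries `u ∈ eRf`, `v ∈ fRe` with
`u * v = e`, `v * u = f`. -/
def IdemEquiv (e f : R) : Prop :=
  ∃ u v : R, e * u * f = u ∧ f * v * e = v ∧ u * v = e ∧ v * u = f

/-- A generating idempotent: it has a finite orthogonal primitive decomposition
    such that every primitive idempotent is equivalent to a member of it. -/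
def IsGenIdem (e : R) : Prop :=
  IsIdem R e ∧ ∃ (n : ℕ) (ε : Fin n → R),
    (∀ k, IsPrimIdem R (ε k)) ∧ (∀ k l, k ≠ l → OrthIdem R (ε k) (ε l)) ∧
    e = ∑ k, ε k ∧ ∀ p : R, IsPrimIdem R p → ∃ k, IdemEquiv R p (ε k)

/-- An idempotent of the corner algebra `fRf`. -/
def IsIdemIn (f e : R) : Prop := IsIdem R e ∧ f * e * f = e

/-- A primitive idempotent of the corner algebra `fRf`. -/
def IsPrimIdemIn (f e : R) : Prop :=
  IsIdemIn R f e ∧ e ≠ 0 ∧ ∀ g : R, IsIdemIn R f g → SubIdem R g e → g = 0 ∨ g = e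

/-- Equivalence of idempotents within the corner algebra `fRf`. -/
def IdemEquivIn (f p q : R) : Prop :=
  ∃ u v : R, f * u * f = u ∧ f * v * f = v ∧ p * u * q = u ∧ q * v * p = v ∧
    u * v = p ∧ v * u = q

/-- A generating idempotent of the corner algebra `fRf`. -/
def IsGenIdemIn (f e : R) : Prop :=
  IsIdemIn R f e ∧ ∃ (n : ℕ) (ε : Fin n → R),
    (∀ k, IsPrimIdemIn R f (ε k)) ∧ (∀ k l, k ≠ l → OrthIdem R (ε k) (ε l)) ∧
    e = ∑ k, ε k ∧ ∀ p : R, IsPrimIdemIn R f p → ∃ k, IdemEquivIn R f p (ε k)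

end MulOnly

section Subspaces
variable [NonUnitalRing R] [Module ℂ R] [SMulCommClass ℂ R R] [IsScalarTower ℂ R R]

/-- The subspace `Re = {x | x * e = x}`. -/
def subAe (e : R) : Submodule ℂ R where
  carrier := {x | x * e = x}
  add_mem' := by
    intro a b ha hb
    simp only [Set.mem_setOf_eq] at *
    rw [add_mul, ha, hb]
  zero_mem' := by simp
  smul_mem' := by
    intro c x hx
    simp only [Set.mem_setOf_eq] at *
    rw [smul_mul_assoc, hx]

/-- The corner subspace `eRf = {x | e * x * f = x}`. -/
def subCorner (e f : R) : Submodule ℂ R where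
  carrier := {x | e * x * f = x}
  add_mem' := by
    intro a b ha hb
    simp only [Set.mem_setOf_eq] at *
    rw [mul_add, add_mul, ha, hb]
  zero_mem' := by simp
  smul_mem' := by
    intro c x hx
    simp only [Set.mem_setOf_eq] at *
    rw [mul_smul_comm, smul_mul_assoc, hx]

/-- A symmetric linear functional. -/
def IsSLF (ψ : R →ₗ[ℂ] ℂ) : Prop := ∀ x y : R, ψ (x * y) = ψ (y * x)

/-- Witness data for an AUF algebra: a family of pairwise orthogonal idempotents with
finite-dimensional corners spanning the algebra. -/
def IsAUFWitness {I : Type v} (E : I → R) : Prop :=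
  (∀ i, IsIdem R (E i)) ∧ (∀ i j, i ≠ j → OrthIdem R (E i) (E j)) ∧
  (∀ i j, FiniteDimensional ℂ (subCorner R (E i) (E j))) ∧
  (⨆ i, ⨆ j, subCorner R (E i) (E j)) = ⊤

/-- An almost unital and finite-dimensional (AUF) algebra. -/
def IsAUF : Prop := ∃ (I : Type u) (E : I → R), IsAUFWitness R E

end Subspaces

end BasicDefs

section AuxLemmas

variable {A : Type u} [NonUnitalRing A] [Module ℂ A] [SMulCommClass ℂ A A]
    [IsScalarTower ℂ A A]

lemma aux_corner_le {f e : A} (h : SubIdem A f e) :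
    subCorner A f f ≤ subCorner A e e := by
  intro x hx
  have hx' : f * x * f = x := hx
  show e * x * e = x
  conv_lhs => rw [← hx']
  simp only [← mul_assoc]
  rw [h.2, mul_assoc (f * x) f e, h.1]
  exact hx'

lemma aux_sum_orth {n : ℕ} {ε : Fin n → A} (hI : ∀ k, IsIdem A (ε k))
    (hO : ∀ k l, k ≠ l → OrthIdem A (ε k) (ε l)) (k : Fin n) :
    ε k * (∑ l, ε l) = ε k ∧ (∑ l, ε l) * ε k = ε k := by
  constructor
  · rw [Finset.mul_sum, Finset.sum_eq_single k]
    · exact hI k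
    · intro b _ hb; exact (hO k b (Ne.symm hb)).1
    · intro h; exact absurd (Finset.mem_univ k) h
  · rw [Finset.sum_mul, Finset.sum_eq_single k]
    · exact hI k
    · intro b _ hb; exact (hO b k hb).1
    · intro h; exact absurd (Finset.mem_univ k) h

lemma aux_decomp
    (hFD : ∀ e : A, IsIdem A e → FiniteDimensional ℂ (subCorner A e e)) :
    ∀ (N : ℕ) (e : A), IsIdem A e → e ≠ 0 →
      Module.finrank ℂ (subCorner A e e) ≤ N →
      ∃ (n : ℕ) (ε : Fin n → A),
        (∀ k, IsPrimIdem A (ε k)) ∧ (∀ k l, k ≠ l → OrthIdem A (ε k) (ε l)) ∧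
        e = ∑ k, ε k := by
  intro N
  induction N with
  | zero =>
    intro e he hne hrank
    haveI := hFD e he
    have hmem : e ∈ subCorner A e e := by
      show e * e * e = e; rw [he, he]
    have h0 : Module.finrank ℂ (subCorner A e e) = 0 := Nat.le_zero.mp hrank
    rw [Submodule.finrank_eq_zero] at h0
    rw [h0] at hmem
    exact absurd hmem (by simpa using hne)
  | succ N ih =>
    intro e he hne hrank
    by_cases hprim : ∀ f : A, IsIdem A f → SubIdem A f e → f = 0 ∨ f = e
    · refine ⟨1, fun _ => e, fun _ => ⟨he, hne, hprim⟩, ?_, by simp⟩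
      intro k l hkl
      exact absurd (Subsingleton.elim k l) hkl
    · push_neg at hprim
      obtain ⟨f, hf, hfe, hf0, hfne⟩ := hprim
      set g := e - f with hgdef
      have hfg : f * g = 0 := by
        rw [hgdef, mul_sub, hfe.1, hf, sub_self]
      have hgf : g * f = 0 := by
        rw [hgdef, sub_mul, hfe.2, hf, sub_self]
      have hg : IsIdem A g := by
        show g * g = g
        rw [hgdef, mul_sub, sub_mul, sub_mul, he, hf, hfe.1, hfe.2]
        abel
      have hge : SubIdem A g e := by
        constructor
        · rw [hgdef, sub_mul, he, hfe.1]
        · rw [hgdef, mul_sub, he, hfe.2]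
      have hg0 : g ≠ 0 := by
        intro h
        exact hfne (by rw [← sub_eq_zero]; rw [hgdef] at h; rw [← neg_sub, h, neg_zero])
      haveI hFDe := hFD e he
      -- strict inclusion for f
      have hlef : subCorner A f f ≤ subCorner A e e := aux_corner_le hfe
      have hltf : subCorner A f f < subCorner A e e := by
        refine lt_of_le_of_ne hlef (fun hEq => ?_)
        have hmem : e ∈ subCorner A f f := by
          rw [hEq]; show e * e * e = e; rw [he, he]
        have : f * e * f = e := hmem
        rw [hfe.1, hf] at this
        exact hfne this
      have hleg : subCorner A g g ≤ subCorner A e e := aux_corner_le hge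
      have hltg : subCorner A g g < subCorner A e e := by
        refine lt_of_le_of_ne hleg (fun hEq => ?_)
        have hmem : f ∈ subCorner A g g := by
          rw [hEq]; show e * f * e = f; rw [hfe.2, hfe.1]
        have : g * f * g = f := hmem
        rw [hgf, zero_mul] at this
        exact hf0 this.symm
      have h1 : Module.finrank ℂ (subCorner A f f) ≤ N := by
        have := Submodule.finrank_lt_finrank_of_lt hltf
        omega
      have h2 : Module.finrank ℂ (subCorner A g g) ≤ N := by
        have := Submodule.finrank_lt_finrank_of_lt hltg
        omega
      obtain ⟨n₁, ε₁, hP1, hO1, hS1⟩ := ih f hf hf0 h1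
      obtain ⟨n₂, ε₂, hP2, hO2, hS2⟩ := ih g hg hg0 h2
      have hI1 : ∀ k, IsIdem A (ε₁ k) := fun k => (hP1 k).1
      have hI2 : ∀ k, IsIdem A (ε₂ k) := fun k => (hP2 k).1
      have hcross : ∀ (k : Fin n₁) (l : Fin n₂),
          ε₁ k * ε₂ l = 0 ∧ ε₂ l * ε₁ k = 0 := by
        intro k l
        have h1f : ε₁ k * f = ε₁ k := by
          rw [hS1]; exact (aux_sum_orth hI1 hO1 k).1
        have hf1 : f * ε₁ k = ε₁ k := by
          rw [hS1]; exact (aux_sum_orth hI1 hO1 k).2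
        have h2g : ε₂ l * g = ε₂ l := by
          rw [hS2]; exact (aux_sum_orth hI2 hO2 l).1
        have hg2 : g * ε₂ l = ε₂ l := by
          rw [hS2]; exact (aux_sum_orth hI2 hO2 l).2
        constructor
        · conv_lhs => rw [← h1f, ← hg2]
          rw [mul_assoc, ← mul_assoc f, hfg, zero_mul, mul_zero]
        · conv_lhs => rw [← h2g, ← hf1]
          rw [mul_assoc, ← mul_assoc g, hgf, zero_mul, mul_zero]
      refine ⟨n₁ + n₂, Fin.append ε₁ ε₂, ?_, ?_, ?_⟩
      · intro k
        refine Fin.addCases (motive := fun k => IsPrimIdem A (Fin.append ε₁ ε₂ k))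
          (fun i => ?_) (fun i => ?_) k
        · simp only [Fin.append_left]; exact hP1 i
        · simp only [Fin.append_right]; exact hP2 i
      · intro k l hkl
        refine Fin.addCases (motive := fun k => k ≠ l → OrthIdem A (Fin.append ε₁ ε₂ k) (Fin.append ε₁ ε₂ l))
          (fun i hil => ?_) (fun i hil => ?_) k hkl
        · refine Fin.addCases (motive := fun l => Fin.castAdd n₂ i ≠ l → OrthIdem A (Fin.append ε₁ ε₂ (Fin.castAdd n₂ i)) (Fin.append ε₁ ε₂ l))
            (fun j hij => ?_) (fun j hij => ?_) l hil
          · simp only [Fin.append_left]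
            exact hO1 i j (fun h => hij (congrArg _ h))
          · simp only [Fin.append_left, Fin.append_right]
            exact ⟨(hcross i j).1, (hcross i j).2⟩
        · refine Fin.addCases (motive := fun l => Fin.natAdd n₁ i ≠ l → OrthIdem A (Fin.append ε₁ ε₂ (Fin.natAdd n₁ i)) (Fin.append ε₁ ε₂ l))
            (fun j hij => ?_) (fun j hij => ?_) l hil
          · simp only [Fin.append_right, Fin.append_left]
            exact ⟨(hcross j i).2, (hcross j i).1⟩
          · simp only [Fin.append_right]
            exact hO2 i j (fun h => hij (congrArg _ h))
      · rw [Fin.sum_univ_add]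
        simp only [Fin.append_left, Fin.append_right]
        rw [← hS1, ← hS2, hgdef]
        abel

end AuxLemmas

/-- In an AUF algebra: (a) all corners `eAf` at idempotents are
finite-dimensional; (b) every nonzero idempotent has a finite orthogonal primitive
decomposition. -/
theorem stmt_6 {A : Type u} [NonUnitalRing A] [Module ℂ A] [SMulCommClass ℂ A A]
    [IsScalarTower ℂ A A] (hA : IsAUF A) :
    (∀ e f : A, IsIdem A e → IsIdem A f → FiniteDimensional ℂ (subCorner A e f)) ∧
    (∀ e : A, IsIdem A e → e ≠ 0 →
      ∃ (n : ℕ) (ε : Fin n → A),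
        (∀ k, IsPrimIdem A (ε k)) ∧ (∀ k l, k ≠ l → OrthIdem A (ε k) (ε l)) ∧
        e = ∑ k, ε k) := by
  obtain ⟨I, E, hEidem, hEorth, hEfd, hEtop⟩ := hA
  classical
  -- the "local unit" associated to a finite set of indices
  set P : Finset I → A := fun T => ∑ i ∈ T, E i with hPdef
  have hPE : ∀ (T : Finset I) (j : I), j ∈ T → P T * E j = E j ∧ E j * P T = E j := by
    intro T j hj
    constructor
    · rw [hPdef]; simp only
      rw [Finset.sum_mul, Finset.sum_eq_single j]
      · exact hEidem j
      · intro b _ hb; exact (hEorth b j hb).1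
      · intro h; exact absurd hj h
    · rw [hPdef]; simp only
      rw [Finset.mul_sum, Finset.sum_eq_single j]
      · exact hEidem j
      · intro b _ hb; exact (hEorth j b (Ne.symm hb)).1
      · intro h; exact absurd hj h
  have hPP : ∀ (T₁ T : Finset I), T₁ ⊆ T → P T * P T₁ = P T₁ ∧ P T₁ * P T = P T₁ := by
    intro T₁ T hsub
    constructor
    · rw [show P T₁ = ∑ i ∈ T₁, E i from rfl, Finset.mul_sum]
      exact Finset.sum_congr rfl fun j hj => (hPE T j (hsub hj)).1
    · rw [show P T₁ = ∑ i ∈ T₁, E i from rfl, Finset.sum_mul]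
      exact Finset.sum_congr rfl fun j hj => (hPE T j (hsub hj)).2
  have hPidem : ∀ T : Finset I, IsIdem A (P T) := fun T => (hPP T T subset_rfl).1
  -- absorption on corners
  have habs : ∀ (T : Finset I) (i j : I), i ∈ T → j ∈ T →
      ∀ x ∈ subCorner A (E i) (E j), P T * x = x ∧ x * P T = x := by
    intro T i j hi hj x hx
    have hx' : E i * x * E j = x := hx
    constructor
    · conv_rhs => rw [← hx']
      conv_lhs => rw [← hx']
      rw [← mul_assoc, ← mul_assoc, (hPE T i hi).1]
    · conv_rhs => rw [← hx']
      conv_lhs => rw [← hx']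
      rw [mul_assoc (E i * x), (hPE T j hj).2]
  -- every element is localized by some finite set
  have hloc : ∀ x : A, ∃ T : Finset I, P T * x = x ∧ x * P T = x := by
    intro x
    have hx : x ∈ ⨆ (ij : I × I), subCorner A (E ij.1) (E ij.2) := by
      rw [iSup_prod, hEtop]; trivial
    refine Submodule.iSup_induction (x := x)
      (fun ij : I × I => subCorner A (E ij.1) (E ij.2))
      (motive := fun x => ∃ T : Finset I, P T * x = x ∧ x * P T = x) hx ?_ ?_ ?_
    · rintro ⟨i, j⟩ y hy
      exact ⟨{i, j}, habs {i, j} i j (by simp) (by simp) y hy⟩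
    · exact ⟨∅, by simp⟩
    · rintro y z ⟨T₁, hy1, hy2⟩ ⟨T₂, hz1, hz2⟩
      refine ⟨T₁ ∪ T₂, ?_, ?_⟩
      · rw [mul_add]
        rw [show P (T₁ ∪ T₂) * y = y from by
          conv_rhs => rw [← hy1]
          conv_lhs => rw [← hy1]
          rw [← mul_assoc, (hPP T₁ (T₁ ∪ T₂) Finset.subset_union_left).1]]
        rw [show P (T₁ ∪ T₂) * z = z from by
          conv_rhs => rw [← hz1]
          conv_lhs => rw [← hz1]
          rw [← mul_assoc, (hPP T₂ (T₁ ∪ T₂) Finset.subset_union_right).1]]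
      · rw [add_mul]
        rw [show y * P (T₁ ∪ T₂) = y from by
          conv_rhs => rw [← hy2]
          conv_lhs => rw [← hy2]
          rw [mul_assoc, (hPP T₁ (T₁ ∪ T₂) Finset.subset_union_left).2]]
        rw [show z * P (T₁ ∪ T₂) = z from by
          conv_rhs => rw [← hz2]
          conv_lhs => rw [← hz2]
          rw [mul_assoc, (hPP T₂ (T₁ ∪ T₂) Finset.subset_union_right).2]]
  -- Part (a)
  have parta : ∀ e f : A, IsIdem A e → IsIdem A f →
      FiniteDimensional ℂ (subCorner A e f) := by
    intro e f he hf
    obtain ⟨T₁, he1, he2⟩ := hloc e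
    obtain ⟨T₂, hf1, hf2⟩ := hloc f
    set T : Finset I := T₁ ∪ T₂ with hTdef
    have hT1 : T₁ ⊆ T := by rw [hTdef]; exact Finset.subset_union_left
    have hT2 : T₂ ⊆ T := by rw [hTdef]; exact Finset.subset_union_right
    have hpe : P T * e = e := by
      conv_rhs => rw [← he1]
      conv_lhs => rw [← he1]
      rw [← mul_assoc, (hPP T₁ T hT1).1]
    have hfp : f * P T = f := by
      conv_rhs => rw [← hf2]
      conv_lhs => rw [← hf2]
      rw [mul_assoc, (hPP T₂ T hT2).2]
    set W : Submodule ℂ A := ⨆ (i : T), ⨆ (j : T), subCorner A (E i.1) (E j.1) with hWdef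
    haveI : ∀ (i j : T), FiniteDimensional ℂ (subCorner A (E i.1) (E j.1)) :=
      fun i j => hEfd i.1 j.1
    haveI hWfd : FiniteDimensional ℂ W := by
      rw [hWdef]; infer_instance
    refine Submodule.finiteDimensional_of_le (S₂ := W) ?_
    intro x hx
    have hx' : e * x * f = x := hx
    have hxp : P T * x * P T = x := by
      conv_lhs => rw [← hx']
      rw [← mul_assoc, ← mul_assoc, hpe, mul_assoc (e * x), hfp, hx']
    have hsum : x = ∑ i ∈ T, ∑ j ∈ T, E i * x * E j := by
      conv_lhs => rw [← hxp]
      rw [show P T = ∑ i ∈ T, E i from rfl, Finset.sum_mul, Finset.sum_mul]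
      refine Finset.sum_congr rfl fun i _ => ?_
      rw [Finset.mul_sum]
    rw [hsum]
    refine Submodule.sum_mem _ fun i hi => Submodule.sum_mem _ fun j hj => ?_
    have hmem : E i * x * E j ∈ subCorner A (E i) (E j) := by
      show E i * (E i * x * E j) * E j = E i * x * E j
      rw [← mul_assoc, ← mul_assoc, hEidem i, mul_assoc (E i * x), hEidem j]
    exact Submodule.mem_iSup_of_mem ⟨i, hi⟩ (Submodule.mem_iSup_of_mem ⟨j, hj⟩ hmem)
  refine ⟨parta, ?_⟩
  intro e he hne
  exact aux_decomp (fun e' he' => parta e' e' he' he')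
    (Module.finrank ℂ (subCorner A e e)) e he hne le_rfl
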